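/- Let P be a finite poset and F ⊆ 2^[n] a convex family containing, for every maximal or minimal element m of P, no weak copy of P \ {m}. Color each set of F with its own distinct color and all sets of 2^[n] \ F with one additional common color. Then this coloring of 2^[n] admits no rainbow weak copy of P. In particular, ar(n,P) ≥ 1 + La_con(n, P⁻(P)). -/

import Mathlib

/-- `G` is a weak copy of the poset `P` in `2^[n]`. -/
def IsWeakCopy {n : ℕ} (P : Type*) [PartialOrder P] [Fintype P]
    (G : Finset (Finset (Fin n))) : Prop :=
  ∃ f : P → Finset (Fin n), Function.Injective f ∧ Finset.univ.image f = G ∧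
    ∀ p q : P, p ≤ q → f p ⊆ f q

/-- If `F` is convex and contains no weak copy of `P \ {m}` for any maximal or minimal
`m`, then coloring the members of `F` with distinct colors and everything else with one
extra color yields no rainbow weak copy of `P`. -/
theorem stmt8 (n : ℕ) (P : Type*) [PartialOrder P] [Fintype P] [DecidableEq P] [Nonempty P]
    (F : Finset (Finset (Fin n)))
    (hconv : ∀ A B C : Finset (Fin n), A ∈ F → C ∈ F → A ⊆ B → B ⊆ C → B ∈ F)
    (hfree : ∀ m : P, ((∀ q, m ≤ q → q = m) ∨ (∀ q, q ≤ m → q = m)) →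
      ¬∃ G ⊆ F, IsWeakCopy {p : P // p ≠ m} G)
    (c : Finset (Fin n) → Option (Finset (Fin n)))
    (hc : c = fun A => if A ∈ F then some A else none) :
    ¬∃ G : Finset (Finset (Fin n)), IsWeakCopy P G ∧
      Set.InjOn c (↑G : Set (Finset (Fin n))) := by
  subst hc
  rintro ⟨G, ⟨f, hfi, hfim, hfmono⟩, hinj⟩
  have hmemG : ∀ p : P, f p ∈ G := by
    intro p; rw [← hfim]; exact Finset.mem_image_of_mem f (Finset.mem_univ p)
  -- at most one element of G lies outside F
  have hone : ∀ A ∈ G, ∀ B ∈ G, A ∉ F → B ∉ F → A = B := by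
    intro A hA B hB hAF hBF
    exact hinj (Finset.mem_coe.mpr hA) (Finset.mem_coe.mpr hB) (by simp [hAF, hBF])
  have key : ∃ m : P, ((∀ q, m ≤ q → q = m) ∨ (∀ q, q ≤ m → q = m)) ∧
      ∀ p : P, p ≠ m → f p ∈ F := by
    by_cases hall : ∀ p : P, f p ∈ F
    · obtain ⟨m, -, hm⟩ := Finset.exists_maximal (s := Finset.univ)
        ⟨Classical.arbitrary P, Finset.mem_univ _⟩
      refine ⟨m, Or.inl fun q hq => ?_, fun p _ => hall p⟩
      by_contra h
      exact h (le_antisymm (hm (Finset.mem_univ q) hq) hq)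
    · push_neg at hall
      obtain ⟨p₀, hp₀⟩ := hall
      have hrest : ∀ p : P, p ≠ p₀ → f p ∈ F := by
        intro p hp
        by_contra hpF
        exact hp (hfi (hone _ (hmemG p) _ (hmemG p₀) hpF hp₀))
      refine ⟨p₀, ?_, hrest⟩
      by_contra h
      push_neg at h
      obtain ⟨⟨q, hq, hqne⟩, ⟨r, hr, hrne⟩⟩ := h
      exact hp₀ (hconv (f r) (f p₀) (f q) (hrest r hrne) (hrest q hqne)
        (hfmono r p₀ hr) (hfmono p₀ q hq))
  obtain ⟨m, hm, hmF⟩ := key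
  apply hfree m hm
  refine ⟨Finset.univ.image (fun p : {p : P // p ≠ m} => f p.1), ?_,
    fun p => f p.1, ?_, rfl, ?_⟩
  · intro A hA
    simp only [Finset.mem_image, Finset.mem_univ, true_and] at hA
    obtain ⟨p, rfl⟩ := hA
    exact hmF p.1 p.2
  · intro a b hab
    exact Subtype.ext (hfi hab)
  · intro p q hpq
    exact hfmono p.1 q.1 hpq
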